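/- arXiv:1810.05999 — 3 statements merged into one kernel-verified Lean document; each statement's English description precedes it below -/
import Mathlib

section
/- Let V be a locally-convex topological vector space, C a closed convex subset of V, p ∈ C, and v ∈ V. If there exists a sequence (v_i) in the tangent cone of C at p (i.e., each p + t_i v_i ∈ C for some t_i > 0) with v_i → v, then there exists a continuous curve c : [0,∞) → C with c(0) = p and lim_{t→0+} (c(t) - p)/t = v. -/
open Filter Topology Set

section Stmt0Aux

variable {V : Type*} [AddCommGroup V] [Module ℝ V] [TopologicalSpace V]
    [IsTopologicalAddGroup V] [ContinuousSMul ℝ V]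

/-- Piecewise-linear interpolation of a sequence `g : ℤ → V` at integer nodes. -/
noncomputable def stmt0_interp (g : ℤ → V) (x : ℝ) : V :=
  (1 - Int.fract x) • g ⌊x⌋ + Int.fract x • g (⌊x⌋ + 1)

lemma stmt0_interp_continuous (g : ℤ → V) : Continuous (stmt0_interp g) := by
  have haff : ∀ (w₁ w₂ : V) (r : ℝ), Continuous (fun x : ℝ => (1 - (x - r)) • w₁ + (x - r) • w₂) := by
    intro w₁ w₂ r
    exact ((continuous_const.sub (continuous_id.sub continuous_const)).smul
      continuous_const).add ((continuous_id.sub continuous_const).smul continuous_const)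
  have key : ∀ (n : ℤ) (x : ℝ), x ∈ Ico (n : ℝ) (n + 1) →
      stmt0_interp g x = (1 - (x - n)) • g n + (x - n) • g (n + 1) := by
    intro n x hx
    have hfl : ⌊x⌋ = n := Int.floor_eq_iff.mpr ⟨hx.1, by exact_mod_cast hx.2⟩
    rw [stmt0_interp, Int.fract, hfl]
  rw [continuous_iff_continuousAt]
  intro a
  by_cases h : (⌊a⌋ : ℝ) = a
  · set n := ⌊a⌋ with hn
    have hval : stmt0_interp g a = g n := by
      have : Int.fract a = 0 := by unfold Int.fract; rw [← hn]; linarith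
      simp [stmt0_interp, this, hn]
    rw [ContinuousAt, ← nhdsLT_sup_nhdsGE a, tendsto_sup]
    constructor
    · -- left limit
      have hmem : Ico (a - 1) a ∈ 𝓝[<] a := Ico_mem_nhdsLT (by linarith)
      have heq : ∀ x ∈ Ico (a - 1) a,
          stmt0_interp g x = (1 - (x - ((n : ℝ) - 1))) • g (n - 1) + (x - ((n : ℝ) - 1)) • g n := by
        intro x hx
        have h2 := key (n - 1) x (by
          constructor
          · push_cast; linarith [hx.1, h]
          · push_cast; linarith [hx.2, h])
        rw [h2]
        norm_num
      have h0 : Tendsto (fun x : ℝ => (1 - (x - ((n : ℝ) - 1))) • g (n - 1)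
          + (x - ((n : ℝ) - 1)) • g n) (𝓝 a)
          (𝓝 ((1 - (a - ((n : ℝ) - 1))) • g (n - 1) + (a - ((n : ℝ) - 1)) • g n)) :=
        (haff (g (n - 1)) (g n) ((n : ℝ) - 1)).tendsto a
      have hv : (1 - (a - ((n : ℝ) - 1))) • g (n - 1) + (a - ((n : ℝ) - 1)) • g n = g n := by
        have : a - ((n : ℝ) - 1) = 1 := by rw [← h]; ring
        rw [this]; simp
      rw [hval, ← hv]
      exact (h0.mono_left (nhdsWithin_le_nhds (s := Iio a))).congr'
        (by filter_upwards [hmem] with x hx using (heq x hx).symm)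
    · -- right limit
      have hmem : Ico a (a + 1) ∈ 𝓝[≥] a := Ico_mem_nhdsGE (by linarith)
      have heq : ∀ x ∈ Ico a (a + 1),
          stmt0_interp g x = (1 - (x - (n : ℝ))) • g n + (x - (n : ℝ)) • g (n + 1) :=
        fun x hx => key n x (by rw [h]; exact hx)
      have h0 : Tendsto (fun x : ℝ => (1 - (x - (n : ℝ))) • g n
          + (x - (n : ℝ)) • g (n + 1)) (𝓝 a)
          (𝓝 ((1 - (a - (n : ℝ))) • g n + (a - (n : ℝ)) • g (n + 1))) :=
        (haff (g n) (g (n + 1)) ((n : ℝ))).tendsto a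
      have hv : (1 - (a - (n : ℝ))) • g n + (a - (n : ℝ)) • g (n + 1) = g n := by
        have : a - (n : ℝ) = 0 := by rw [← h]; ring
        rw [this]; simp
      rw [hval, ← hv]
      exact (h0.mono_left (nhdsWithin_le_nhds (s := Ici a))).congr'
        (by filter_upwards [hmem] with x hx using (heq x hx).symm)
  · have hlt : (⌊a⌋ : ℝ) < a := lt_of_le_of_ne (Int.floor_le a) h
    have hlt2 : a < (⌊a⌋ : ℝ) + 1 := Int.lt_floor_add_one a
    have hnb : Ioo ((⌊a⌋ : ℝ)) ((⌊a⌋ : ℝ) + 1) ∈ 𝓝 a := Ioo_mem_nhds hlt hlt2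
    refine ((haff (g ⌊a⌋) (g (⌊a⌋ + 1)) (⌊a⌋ : ℝ)).continuousAt).congr ?_
    filter_upwards [hnb] with x hx
    exact (key ⌊a⌋ x ⟨hx.1.le, by exact_mod_cast hx.2⟩).symm

lemma stmt0_interp_tendsto [LocallyConvexSpace ℝ V] (g : ℤ → V) (v : V)
    (hg : Tendsto g atTop (𝓝 v)) : Tendsto (stmt0_interp g) atTop (𝓝 v) := by
  rw [(LocallyConvexSpace.convex_basis (𝕜 := ℝ) v).tendsto_right_iff]
  rintro U ⟨hU, hUc⟩
  obtain ⟨N, hN⟩ := eventually_atTop.mp (hg.eventually_mem hU)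
  filter_upwards [eventually_ge_atTop ((N : ℝ))] with x hx
  have h1 : N ≤ ⌊x⌋ := Int.le_floor.mpr hx
  exact hUc (hN _ h1) (hN _ (by omega)) (by linarith [Int.fract_lt_one x])
    (Int.fract_nonneg x) (by ring)

end Stmt0Aux

/-- If `v` is the limit of a sequence in the tangent cone of the closed
convex set `C` at `p ∈ C`, then there is a continuous curve in `C` starting at `p`
with right derivative `v` at `0`. -/
theorem stmt0 {V : Type*} [AddCommGroup V] [Module ℝ V] [TopologicalSpace V]
    [IsTopologicalAddGroup V] [ContinuousSMul ℝ V] [LocallyConvexSpace ℝ V]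
    (C : Set V) (hC : IsClosed C) (hconv : Convex ℝ C) (p : V) (hp : p ∈ C) (v : V)
    (u : ℕ → V) (hu : ∀ i, ∃ t : ℝ, 0 < t ∧ p + t • u i ∈ C)
    (hlim : Tendsto u atTop (𝓝 v)) :
    ∃ c : ℝ → V, ContinuousOn c (Ici 0) ∧ (∀ t ∈ Ici (0:ℝ), c t ∈ C) ∧ c 0 = p ∧
      Tendsto (fun t : ℝ => t⁻¹ • (c t - p)) (𝓝[>] 0) (𝓝 v) := by
  classical
  choose T hT0 hTC using hu
  -- the decreasing time scales
  set s : ℕ → ℝ := fun j => Nat.rec (T 0) (fun j sj => min (T (j + 1)) (sj / 2)) j with hs_def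
  have hsSucc : ∀ j, s (j + 1) = min (T (j + 1)) (s j / 2) := fun j => rfl
  have hspos : ∀ j, 0 < s j := by
    intro j
    induction j with
    | zero => exact hT0 0
    | succ j ih => exact lt_min (hT0 _) (by linarith)
  have hsmono : Antitone s := by
    apply antitone_nat_of_succ_le
    intro j
    rw [hsSucc]
    exact (min_le_right _ _).trans (by linarith [hspos j])
  have hsT : ∀ j, s j ≤ T j := by
    intro j
    cases j with
    | zero => exact le_refl _
    | succ j => exact min_le_left _ _
  have H : ∀ j t, 0 < t → t ≤ s j → p + t • u j ∈ C := by
    intro j t ht hts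
    have hTj := hT0 j
    have htT : t ≤ T j := hts.trans (hsT j)
    have h1 : p + t • u j = (1 - t / T j) • p + (t / T j) • (p + T j • u j) := by
      have hc : t / T j * T j = t := div_mul_cancel₀ t (ne_of_gt hTj)
      rw [smul_add, smul_smul, hc, sub_smul, one_smul]
      abel
    rw [h1]
    exact hconv hp (hTC j) (by rw [sub_nonneg]; exact div_le_one_of_le₀ htT hTj.le)
      (div_pos ht hTj).le (by ring)
  have hsle : ∀ j, s j ≤ s 0 / 2 ^ j := by
    intro j
    induction j with
    | zero => simp
    | succ j ih =>
      rw [hsSucc, pow_succ, ← div_div]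
      exact (min_le_right _ _).trans (by linarith)
  -- the node times
  set r : ℕ → ℝ := fun k => s 0 / 2 ^ k with hr_def
  have hrpos : ∀ k, 0 < r k := fun k => div_pos (hspos 0) (by positivity)
  have hr_anti : Antitone r := by
    intro k k' hk
    exact div_le_div_of_nonneg_left (hspos 0).le (by positivity) (pow_le_pow_right₀ one_le_two hk)
  have hr0 : Tendsto r atTop (𝓝 0) := by
    have h2 : Tendsto (fun k : ℕ => (1 / 2 : ℝ) ^ k) atTop (𝓝 0) :=
      tendsto_pow_atTop_nhds_zero_of_lt_one (by norm_num) (by norm_num)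
    have := h2.const_mul (s 0)
    rw [mul_zero] at this
    refine this.congr fun k => ?_
    rw [hr_def]
    field_simp
    rw [mul_assoc, ← mul_pow]; norm_num
  -- the index selection
  set i : ℕ → ℕ := fun k => Nat.findGreatest (fun j => r k ≤ s j) k with hi_def
  have hi_spec : ∀ k, r k ≤ s (i k) := by
    intro k
    exact Nat.findGreatest_spec (P := fun j => r k ≤ s j) (Nat.zero_le k)
      (show r k ≤ s 0 from div_le_self (hspos 0).le (one_le_pow₀ one_le_two))
  have hi_tend : Tendsto i atTop atTop := by
    rw [tendsto_atTop_atTop]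
    intro j
    obtain ⟨K, hK⟩ := eventually_atTop.mp (hr0.eventually_lt_const (hspos j))
    refine ⟨max K j, fun k hk => ?_⟩
    exact Nat.le_findGreatest (le_trans (le_max_right K j) hk)
      (le_of_lt (hK k (le_trans (le_max_left K j) hk)))
  -- the shifted index and direction sequence
  set J : ℕ → ℕ := fun k => i (k - 1) with hJ_def
  have hJ_tend : Tendsto J atTop atTop := by
    refine hi_tend.comp ?_
    exact tendsto_sub_atTop_nat 1
  have hJC : ∀ k t, 0 < t → t ≤ r k → p + t • u (J k) ∈ C := by
    intro k t ht htr
    refine H _ t ht (htr.trans ?_)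
    exact (hr_anti (Nat.sub_le k 1)).trans (hi_spec (k - 1))
  have hJC' : ∀ k t, 0 < t → t ≤ r k → p + t • u (J (k + 1)) ∈ C := by
    intro k t ht htr
    have : J (k + 1) = i k := by simp [hJ_def]
    rw [this]
    exact H _ t ht (htr.trans (hi_spec k))
  set g : ℤ → V := fun n => u (J n.toNat) with hg_def
  have hg_tend : Tendsto g atTop (𝓝 v) := by
    refine (hlim.comp hJ_tend).comp ?_
    rw [tendsto_atTop_atTop]
    intro b
    exact ⟨(b : ℤ), fun n hn =>
      (Int.le_toNat (le_trans (Int.natCast_nonneg b) hn)).mpr hn⟩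
  -- the curve
  set f : ℝ → V := stmt0_interp g with hf_def
  set c : ℝ → V := fun t => p + min t (s 0) • f (Real.logb 2 (s 0 / min t (s 0))) with hc_def
  have hc0 : c 0 = p := by
    rw [hc_def]
    simp [min_eq_left (hspos 0).le]
  have key : ∀ t : ℝ, 0 < t → c t ∈ C := by
    intro t ht
    set τ := min t (s 0) with hτ
    have hτpos : 0 < τ := lt_min ht (hspos 0)
    have hτle : τ ≤ s 0 := min_le_right _ _
    set x := Real.logb 2 (s 0 / τ) with hx
    have hx0 : 0 ≤ x := Real.logb_nonneg one_lt_two ((one_le_div hτpos).mpr hτle)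
    set k := ⌊x⌋.toNat with hk
    have hfk : ⌊x⌋ = (k : ℤ) := (Int.toNat_of_nonneg (Int.floor_nonneg.mpr hx0)).symm
    have hkx : (k : ℝ) ≤ x := by
      have h0 := Int.floor_le x
      rw [hfk] at h0
      exact_mod_cast h0
    have hτr : τ ≤ r k := by
      have h2x : (2 : ℝ) ^ x = s 0 / τ :=
        Real.rpow_logb two_pos (by norm_num) (div_pos (hspos 0) hτpos)
      have hpow : (2 : ℝ) ^ (k : ℕ) ≤ (2 : ℝ) ^ x := by
        calc (2 : ℝ) ^ (k : ℕ) = (2 : ℝ) ^ ((k : ℕ) : ℝ) := (Real.rpow_natCast 2 k).symm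
        _ ≤ 2 ^ x := Real.rpow_le_rpow_of_exponent_le one_le_two hkx
      have hτeq : τ = s 0 / (2 : ℝ) ^ x := by
        rw [h2x]
        field_simp
        rw [div_self (hspos 0).ne']
      rw [hτeq]
      exact div_le_div_of_nonneg_left (hspos 0).le (by positivity) hpow
    have hgk : g ((k : ℕ) : ℤ) = u (J k) := by simp [hg_def]
    have hgk1 : g (((k : ℕ) : ℤ) + 1) = u (J (k + 1)) := by
      have h' : (((k : ℕ) : ℤ) + 1).toNat = k + 1 := by omega
      simp only [hg_def, h']
    set lam := Int.fract x with hlam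
    have hlam0 : 0 ≤ lam := Int.fract_nonneg x
    have hlam1 : lam < 1 := Int.fract_lt_one x
    have hct : c t = (1 - lam) • (p + τ • u (J k)) + lam • (p + τ • u (J (k + 1))) := by
      show p + τ • f x = _
      rw [hf_def]
      show p + τ • ((1 - Int.fract x) • g ⌊x⌋ + Int.fract x • g (⌊x⌋ + 1)) = _
      rw [hfk, hgk, hgk1, ← hlam]
      match_scalars <;> ring
    rw [hct]
    exact hconv (hJC k τ hτpos hτr) (hJC' k τ hτpos hτr) (by linarith) hlam0 (by ring)
  have hx_top : Tendsto (fun t : ℝ => Real.logb 2 (s 0 / t)) (𝓝[>] (0 : ℝ)) atTop := by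
    refine (Real.tendsto_logb_atTop one_lt_two).comp ?_
    have h1 : Tendsto (fun t : ℝ => t⁻¹) (𝓝[>] (0 : ℝ)) atTop := tendsto_inv_nhdsGT_zero
    exact (Tendsto.const_mul_atTop (hspos 0) h1).congr fun t => (div_eq_mul_inv _ _).symm
  have hmin_eq : ∀ᶠ t in 𝓝[>] (0 : ℝ), min t (s 0) = t := by
    filter_upwards [Ioo_mem_nhdsGT (hspos 0)] with t ht
    exact min_eq_left ht.2.le
  have hF : Tendsto (fun t : ℝ => f (Real.logb 2 (s 0 / min t (s 0)))) (𝓝[>] (0 : ℝ)) (𝓝 v) := by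
    have hcomp : Tendsto (fun t : ℝ => f (Real.logb 2 (s 0 / t))) (𝓝[>] (0 : ℝ)) (𝓝 v) :=
      (stmt0_interp_tendsto g v hg_tend).comp hx_top
    exact hcomp.congr' (by filter_upwards [hmin_eq] with t ht; rw [ht])
  have hderiv : Tendsto (fun t : ℝ => t⁻¹ • (c t - p)) (𝓝[>] (0 : ℝ)) (𝓝 v) := by
    refine hF.congr' ?_
    filter_upwards [hmin_eq, self_mem_nhdsWithin] with t hmt ht
    show f _ = t⁻¹ • (p + min t (s 0) • f (Real.logb 2 (s 0 / min t (s 0))) - p)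
    rw [hmt, add_sub_cancel_left, smul_smul, inv_mul_cancel₀ (ne_of_gt ht), one_smul]
  have hmem : ∀ t ∈ Ici (0 : ℝ), c t ∈ C := by
    intro t ht
    rcases eq_or_lt_of_le (mem_Ici.mp ht) with h | h
    · rw [← h, hc0]; exact hp
    · exact key t h
  have hcont : ContinuousOn c (Ici 0) := by
    intro t ht
    rcases eq_or_lt_of_le (mem_Ici.mp ht) with h | h
    · subst h
      have h0 : Tendsto c (𝓝[>] (0 : ℝ)) (𝓝 p) := by
        have hm : Tendsto (fun t : ℝ => min t (s 0)) (𝓝[>] (0 : ℝ)) (𝓝 0) := by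
          have h1 : Tendsto (fun t : ℝ => min t (s 0)) (𝓝 (0 : ℝ)) (𝓝 (min 0 (s 0))) :=
            (continuous_id.min continuous_const).tendsto 0
          rw [min_eq_left (hspos 0).le] at h1
          exact h1.mono_left nhdsWithin_le_nhds
        have h2 := hm.smul hF
        rw [zero_smul] at h2
        have h3 := (tendsto_const_nhds (x := p) (f := 𝓝[>] (0 : ℝ))).add h2
        rw [add_zero] at h3
        exact h3
      have hset : Ici (0 : ℝ) = {0} ∪ Ioi 0 := by
        rw [Set.singleton_union, Set.Ioi_insert]
      show Tendsto c (𝓝[Ici (0 : ℝ)] 0) (𝓝 (c 0))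
      rw [hc0, hset, nhdsWithin_union, nhdsWithin_singleton]
      exact tendsto_sup.mpr ⟨hc0 ▸ tendsto_pure_nhds c 0, h0⟩
    · apply ContinuousAt.continuousWithinAt
      have hmt : ContinuousAt (fun t' : ℝ => min t' (s 0)) t :=
        (continuous_id.min continuous_const).continuousAt
      have hmpos : 0 < min t (s 0) := lt_min h (hspos 0)
      have h1 : ContinuousAt (fun t' : ℝ => s 0 / min t' (s 0)) t :=
        continuousAt_const.div hmt hmpos.ne'
      have h2 : ContinuousAt (fun t' : ℝ => Real.logb 2 (s 0 / min t' (s 0))) t := by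
        have hpos : s 0 / min t (s 0) ≠ 0 := (div_pos (hspos 0) hmpos).ne'
        have h3 : ContinuousAt (Real.log ∘ fun t' : ℝ => s 0 / min t' (s 0)) t :=
          ContinuousAt.comp (Real.continuousAt_log hpos) h1
        have h3' : ContinuousAt (fun t' : ℝ => Real.log (s 0 / min t' (s 0))) t := h3
        simp only [Real.logb]
        exact h3'.div_const _
      exact continuousAt_const.add (hmt.smul (((stmt0_interp_continuous g).continuousAt).comp h2))
  exact ⟨c, hcont, hmem, hc0, hderiv⟩
end

section
/- Let V be a normed space, C a closed convex subset, p ∈ C, and v ∈ V. There exists a continuous curve c : [0,∞) → C with c(0) = p and right derivative v at 0 if and only if θ(v) ≥ 0 for every continuous linear functional θ on V satisfying θ(p) = inf_{q ∈ C} θ(q). -/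
open Filter Topology Set

private noncomputable def seqT (δ : ℕ → ℝ) : ℕ → ℝ
  | 0 => δ 0
  | n+1 => min (δ (n+1)) (seqT δ n) / 2

private lemma seqT_pos (δ : ℕ → ℝ) (hδ : ∀ n, 0 < δ n) : ∀ n, 0 < seqT δ n
  | 0 => hδ 0
  | n+1 => by
      have h := seqT_pos δ hδ n
      have := lt_min (hδ (n+1)) h
      simp only [seqT]; linarith

private lemma seqT_le (δ : ℕ → ℝ) (hδ : ∀ n, 0 < δ n) : ∀ n, seqT δ n ≤ δ n
  | 0 => le_rfl
  | n+1 => by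
      have h1 := min_le_left (δ (n+1)) (seqT δ n)
      have h2 := lt_min (hδ (n+1)) (seqT_pos δ hδ n)
      simp only [seqT]
      linarith

private lemma seqT_succ_le (δ : ℕ → ℝ) (n : ℕ) :
    seqT δ (n+1) ≤ seqT δ n / 2 := by
  have := min_le_right (δ (n+1)) (seqT δ n)
  simp only [seqT]
  linarith

private lemma seqT_strictAnti (δ : ℕ → ℝ) (hδ : ∀ n, 0 < δ n) : StrictAnti (seqT δ) := by
  apply strictAnti_nat_of_succ_lt
  intro n
  have h1 := seqT_succ_le δ n
  have h2 := seqT_pos δ hδ n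
  linarith

private lemma seqT_tendsto (δ : ℕ → ℝ) (hδ : ∀ n, 0 < δ n) :
    Tendsto (seqT δ) atTop (𝓝 0) := by
  have hb : ∀ n, seqT δ n ≤ seqT δ 0 * (1/2)^n := by
    intro n
    induction n with
    | zero => simp
    | succ n ih =>
        have h1 := seqT_succ_le δ n
        have := seqT_pos δ hδ n
        calc seqT δ (n+1) ≤ seqT δ n / 2 := h1
          _ ≤ seqT δ 0 * (1/2)^n / 2 := by linarith
          _ = seqT δ 0 * (1/2)^(n+1) := by ring
  have hg : Tendsto (fun n : ℕ => seqT δ 0 * (1/2)^n) atTop (𝓝 0) := by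
    have := tendsto_pow_atTop_nhds_zero_of_lt_one (by norm_num : (0:ℝ) ≤ 1/2)
      (by norm_num : (1:ℝ)/2 < 1)
    simpa using this.const_mul (seqT δ 0)
  exact squeeze_zero (fun n => (seqT_pos δ hδ n).le) hb hg

section
variable {V : Type*} [NormedAddCommGroup V] [NormedSpace ℝ V]

private lemma conv_seg {C : Set V} (hconv : Convex ℝ C) {p x : V} (hp : p ∈ C) (hx : x ∈ C)
    {a : ℝ} (ha : 0 ≤ a) (ha1 : a ≤ 1) : p + a • (x - p) ∈ C := by
  have h := hconv hp hx (by linarith : (0:ℝ) ≤ 1 - a) ha (by ring)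
  convert h using 1
  module

private noncomputable def pieceF (p : V) (w : ℕ → V) (δ : ℕ → ℝ) (n : ℕ) (x : ℝ) : V :=
  ((seqT δ n - x) / (seqT δ n - seqT δ (n+1))) • (p + seqT δ (n+1) • w (n+1))
  + ((x - seqT δ (n+1)) / (seqT δ n - seqT δ (n+1))) • (p + seqT δ n • w n)

open Classical in
private noncomputable def curveC (p : V) (w : ℕ → V) (δ : ℕ → ℝ) (x : ℝ) : V :=
  if seqT δ 0 ≤ x then p + seqT δ 0 • w 0
  else if h : ∃ n, seqT δ (n+1) ≤ x then pieceF p w δ (Nat.find h) x else p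

private lemma pieceF_left (p : V) (w : ℕ → V) (δ : ℕ → ℝ) (n : ℕ)
    (hd : seqT δ (n+1) < seqT δ n) :
    pieceF p w δ n (seqT δ (n+1)) = p + seqT δ (n+1) • w (n+1) := by
  have hd' : seqT δ n - seqT δ (n+1) ≠ 0 := by linarith
  simp [pieceF, div_self hd']

private lemma pieceF_right (p : V) (w : ℕ → V) (δ : ℕ → ℝ) (n : ℕ)
    (hd : seqT δ (n+1) < seqT δ n) :
    pieceF p w δ n (seqT δ n) = p + seqT δ n • w n := by
  have hd' : seqT δ n - seqT δ (n+1) ≠ 0 := by linarith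
  simp [pieceF, div_self hd']

private lemma pieceF_continuous (p : V) (w : ℕ → V) (δ : ℕ → ℝ) (n : ℕ) :
    Continuous (pieceF p w δ n) := by
  unfold pieceF
  fun_prop

private lemma curveC_eq (p : V) (w : ℕ → V) (δ : ℕ → ℝ) (hδ : ∀ n, 0 < δ n)
    (n : ℕ) {x : ℝ} (h1 : seqT δ (n+1) ≤ x) (h2 : x ≤ seqT δ n) :
    curveC p w δ x = pieceF p w δ n x := by
  classical
  have hanti := seqT_strictAnti δ hδ
  by_cases h0 : seqT δ 0 ≤ x
  · have hn0 : n = 0 := by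
      by_contra hne
      have h4 : seqT δ n < seqT δ 0 := hanti (Nat.pos_of_ne_zero hne)
      linarith
    subst hn0
    have hx : x = seqT δ 0 := le_antisymm h2 h0
    subst hx
    rw [pieceF_right p w δ 0 (hanti Nat.zero_lt_one)]
    simp [curveC]
  · have hex : ∃ m, seqT δ (m+1) ≤ x := ⟨n, h1⟩
    have hcurve : curveC p w δ x = pieceF p w δ (Nat.find hex) x := by
      simp [curveC, h0, hex]
    rw [hcurve]
    have hm1 : seqT δ (Nat.find hex + 1) ≤ x := Nat.find_spec hex
    have hmn : Nat.find hex ≤ n := Nat.find_le h1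
    rcases eq_or_lt_of_le hmn with heq | hlt
    · rw [heq]
    · have hle : Nat.find hex + 1 ≤ n := hlt
      have h3 : seqT δ n ≤ seqT δ (Nat.find hex + 1) := hanti.antitone hle
      have hx1 : x = seqT δ n := le_antisymm h2 (le_trans h3 hm1)
      have heqT : seqT δ (Nat.find hex + 1) = seqT δ n := le_antisymm (hx1 ▸ hm1) h3
      have hidx : Nat.find hex + 1 = n := hanti.injective heqT
      subst hx1
      calc pieceF p w δ (Nat.find hex) (seqT δ n)
          = pieceF p w δ (Nat.find hex) (seqT δ (Nat.find hex + 1)) := by rw [heqT]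
        _ = p + seqT δ (Nat.find hex + 1) • w (Nat.find hex + 1) :=
            pieceF_left _ _ _ _ (hanti (lt_add_one _))
        _ = p + seqT δ n • w n := by rw [heqT, hidx]
        _ = pieceF p w δ n (seqT δ n) := (pieceF_right _ _ _ _ (hanti (lt_add_one _))).symm

private lemma node_mem {C : Set V} (hconv : Convex ℝ C) {p : V} (hp : p ∈ C)
    (w : ℕ → V) (δ : ℕ → ℝ) (hδ : ∀ n, 0 < δ n) (hwC : ∀ n, p + δ n • w n ∈ C) (k : ℕ) :
    p + seqT δ k • w k ∈ C := by
  have h1 := seqT_pos δ hδ k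
  have h2 := seqT_le δ hδ k
  have h3 := hδ k
  have h := conv_seg hconv hp (hwC k) (a := seqT δ k / δ k)
    (div_nonneg h1.le h3.le) (div_le_one_of_le₀ h2 h3.le)
  have e : p + δ k • w k - p = δ k • w k := add_sub_cancel_left p _
  rw [e, smul_smul, div_mul_cancel₀ _ (ne_of_gt h3)] at h
  exact h

private lemma pieceF_mem {C : Set V} (hconv : Convex ℝ C) {p : V} (hp : p ∈ C)
    (w : ℕ → V) (δ : ℕ → ℝ) (hδ : ∀ n, 0 < δ n) (hwC : ∀ n, p + δ n • w n ∈ C) (n : ℕ)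
    {x : ℝ} (h1 : seqT δ (n+1) ≤ x) (h2 : x ≤ seqT δ n) :
    pieceF p w δ n x ∈ C := by
  have hd : 0 < seqT δ n - seqT δ (n+1) :=
    sub_pos.2 (seqT_strictAnti δ hδ (lt_add_one n))
  exact hconv (node_mem hconv hp w δ hδ hwC (n+1)) (node_mem hconv hp w δ hδ hwC n)
    (div_nonneg (by linarith) hd.le) (div_nonneg (by linarith) hd.le)
    (by field_simp; ring)

private lemma pieceF_sub (p : V) (v : V) (w : ℕ → V) (δ : ℕ → ℝ) (n : ℕ)
    {x : ℝ} (hx : x ≠ 0) (hd : seqT δ (n+1) < seqT δ n) :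
    x⁻¹ • (pieceF p w δ n x - p) - v =
      (x⁻¹ * ((seqT δ n - x) / (seqT δ n - seqT δ (n+1)) * seqT δ (n+1))) • (w (n+1) - v)
      + (x⁻¹ * ((x - seqT δ (n+1)) / (seqT δ n - seqT δ (n+1)) * seqT δ n)) • (w n - v) := by
  have hd' : seqT δ n - seqT δ (n+1) ≠ 0 := by linarith
  unfold pieceF
  match_scalars <;> field_simp <;> ring

private lemma pieceF_bound (p : V) (v : V) (w : ℕ → V) (δ : ℕ → ℝ) (hδ : ∀ n, 0 < δ n)
    (hwv : ∀ n, ‖w n - v‖ ≤ 1/((n:ℝ)+1)) (n : ℕ)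
    {x : ℝ} (hx : 0 < x) (h1 : seqT δ (n+1) ≤ x) (h2 : x ≤ seqT δ n) :
    ‖x⁻¹ • (pieceF p w δ n x - p) - v‖ ≤ 1/((n:ℝ)+1) := by
  have hd : seqT δ (n+1) < seqT δ n := seqT_strictAnti δ hδ (lt_add_one n)
  have hd' : seqT δ n - seqT δ (n+1) ≠ 0 := by linarith
  have hT1 := seqT_pos δ hδ (n+1)
  have hT0 := seqT_pos δ hδ n
  set a := x⁻¹ * ((seqT δ n - x) / (seqT δ n - seqT δ (n+1)) * seqT δ (n+1)) with ha_def
  set b := x⁻¹ * ((x - seqT δ (n+1)) / (seqT δ n - seqT δ (n+1)) * seqT δ n) with hb_def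
  have ha : 0 ≤ a := by
    apply mul_nonneg (inv_nonneg.2 hx.le)
    apply mul_nonneg (div_nonneg (by linarith) (by linarith)) hT1.le
  have hb : 0 ≤ b := by
    apply mul_nonneg (inv_nonneg.2 hx.le)
    apply mul_nonneg (div_nonneg (by linarith) (by linarith)) hT0.le
  have hab : a + b = 1 := by
    rw [ha_def, hb_def]
    field_simp
    ring
  rw [pieceF_sub p v w δ n (ne_of_gt hx) hd]
  have hn1 : ‖w (n+1) - v‖ ≤ 1/((n:ℝ)+1) := by
    refine le_trans (hwv (n+1)) ?_
    apply one_div_le_one_div_of_le (by positivity)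
    push_cast
    linarith
  calc ‖a • (w (n+1) - v) + b • (w n - v)‖
      ≤ ‖a • (w (n+1) - v)‖ + ‖b • (w n - v)‖ := norm_add_le _ _
    _ = a * ‖w (n+1) - v‖ + b * ‖w n - v‖ := by
        rw [norm_smul, norm_smul, Real.norm_eq_abs, Real.norm_eq_abs,
          abs_of_nonneg ha, abs_of_nonneg hb]
    _ ≤ a * (1/((n:ℝ)+1)) + b * (1/((n:ℝ)+1)) := by
        apply add_le_add (mul_le_mul_of_nonneg_left hn1 ha)
          (mul_le_mul_of_nonneg_left (hwv n) hb)
    _ = 1/((n:ℝ)+1) := by rw [← add_mul, hab, one_mul]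

private lemma exists_interval (δ : ℕ → ℝ) (hδ : ∀ n, 0 < δ n)
    {x : ℝ} (hx : 0 < x) (hx0 : x < seqT δ 0) :
    ∃ n, seqT δ (n+1) ≤ x ∧ x < seqT δ n := by
  classical
  have hex : ∃ m, seqT δ m ≤ x := by
    obtain ⟨m, hm⟩ := ((seqT_tendsto δ hδ).eventually_lt_const hx).exists
    exact ⟨m, hm.le⟩
  have hm := Nat.find_spec hex
  have hm0 : Nat.find hex ≠ 0 := by
    intro h
    rw [h] at hm
    linarith
  obtain ⟨k, hk⟩ : ∃ k, Nat.find hex = k + 1 := ⟨Nat.find hex - 1, by omega⟩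
  rw [hk] at hm
  refine ⟨k, hm, ?_⟩
  have := Nat.find_min hex (by omega : k < Nat.find hex)
  linarith [not_le.1 this]

private lemma exists_curve {C : Set V} (hconv : Convex ℝ C) {p : V} (hp : p ∈ C) (v : V)
    (w : ℕ → V) (δ : ℕ → ℝ) (hδ : ∀ n, 0 < δ n) (hwC : ∀ n, p + δ n • w n ∈ C)
    (hwv : ∀ n, ‖w n - v‖ ≤ 1/((n:ℝ)+1)) :
    ∃ c : ℝ → V, ContinuousOn c (Ici 0) ∧ (∀ t ∈ Ici (0:ℝ), c t ∈ C) ∧ c 0 = p ∧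
      Tendsto (fun t : ℝ => t⁻¹ • (c t - p)) (𝓝[>] 0) (𝓝 v) := by
  classical
  have hanti := seqT_strictAnti δ hδ
  have hT0 : 0 < seqT δ 0 := seqT_pos δ hδ 0
  have hc0 : curveC p w δ 0 = p := by
    have h1 : ¬ seqT δ 0 ≤ 0 := not_le.2 hT0
    have h2 : ¬ ∃ n, seqT δ (n+1) ≤ (0:ℝ) := by
      rintro ⟨n, hn⟩
      exact absurd hn (not_le.2 (seqT_pos δ hδ _))
    simp [curveC, h1, h2]
  -- key bound on (0, T 0)
  have hbound : ∀ x : ℝ, 0 < x → x < seqT δ 0 →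
      ∃ n : ℕ, seqT δ (n+1) ≤ x ∧
        ‖x⁻¹ • (curveC p w δ x - p) - v‖ ≤ 1/((n:ℝ)+1) := by
    intro x hx hx0
    obtain ⟨n, hn1, hn2⟩ := exists_interval δ hδ hx hx0
    refine ⟨n, hn1, ?_⟩
    rw [curveC_eq p w δ hδ n hn1 hn2.le]
    exact pieceF_bound p v w δ hδ hwv n hx hn1 hn2.le
  refine ⟨curveC p w δ, ?_, ?_, hc0, ?_⟩
  · -- continuity
    intro x hx
    rcases eq_or_lt_of_le (mem_Ici.mp hx : (0:ℝ) ≤ x) with h0 | h0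
    · -- at 0
      subst h0
      rw [ContinuousWithinAt, hc0]
      rw [tendsto_iff_norm_sub_tendsto_zero]
      have hev : ∀ᶠ y in 𝓝[Ici (0:ℝ)] 0, ‖curveC p w δ y - p‖ ≤ (‖v‖ + 1) * y := by
        filter_upwards [mem_nhdsWithin_of_mem_nhds (Iio_mem_nhds hT0),
          self_mem_nhdsWithin] with y hy1 hy2
        rcases eq_or_lt_of_le (mem_Ici.mp hy2 : (0:ℝ) ≤ y) with hy0 | hy0
        · rw [← hy0, hc0]; simp
        · obtain ⟨n, _, hn2⟩ := hbound y hy0 hy1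
          have h3 : ‖y⁻¹ • (curveC p w δ y - p)‖ ≤ ‖v‖ + 1 := by
            have h4 : (1:ℝ)/((n:ℝ)+1) ≤ 1 := by
              rw [div_le_one (by positivity)]
              push_cast
              linarith [Nat.cast_nonneg (α := ℝ) n]
            calc ‖y⁻¹ • (curveC p w δ y - p)‖
                = ‖(y⁻¹ • (curveC p w δ y - p) - v) + v‖ := by rw [sub_add_cancel]
              _ ≤ ‖y⁻¹ • (curveC p w δ y - p) - v‖ + ‖v‖ := norm_add_le _ _
              _ ≤ ‖v‖ + 1 := by linarith
          have h5 : curveC p w δ y - p = y • (y⁻¹ • (curveC p w δ y - p)) :=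
            (smul_inv_smul₀ (ne_of_gt hy0) _).symm
          rw [h5, norm_smul, Real.norm_eq_abs, abs_of_pos hy0]
          calc y * ‖y⁻¹ • (curveC p w δ y - p)‖ ≤ y * (‖v‖ + 1) :=
              mul_le_mul_of_nonneg_left h3 hy0.le
            _ = (‖v‖ + 1) * y := mul_comm _ _
      have hg : Tendsto (fun y : ℝ => (‖v‖ + 1) * y) (𝓝[Ici (0:ℝ)] 0) (𝓝 0) := by
        have : Tendsto (fun y : ℝ => (‖v‖ + 1) * y) (𝓝 0) (𝓝 0) := by
          have h6 : Continuous (fun y : ℝ => (‖v‖ + 1) * y) := continuous_const.mul continuous_id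
          have := h6.tendsto 0
          simpa using this
        exact this.mono_left nhdsWithin_le_nhds
      have hnneg : ∀ᶠ y in 𝓝[Ici (0:ℝ)] 0, 0 ≤ ‖curveC p w δ y - p‖ :=
        Eventually.of_forall (fun _ => norm_nonneg _)
      exact squeeze_zero' hnneg hev hg
    · -- at x > 0 : continuous at x
      apply ContinuousAt.continuousWithinAt
      by_cases hge : seqT δ 0 ≤ x
      · rcases eq_or_lt_of_le hge with hgeq | hgt
        · -- x = seqT δ 0 : paste
          have hd10 : seqT δ 1 < seqT δ 0 := hanti Nat.zero_lt_one
          have hA : ContinuousWithinAt (curveC p w δ) (Icc (seqT δ 1) (seqT δ 0)) x := by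
            apply ((pieceF_continuous p w δ 0).continuousAt.continuousWithinAt).congr
            · intro y hy
              exact curveC_eq p w δ hδ 0 hy.1 hy.2
            · exact curveC_eq p w δ hδ 0 (by rw [← hgeq]; exact hd10.le) (le_of_eq hgeq.symm)
          have hB : ContinuousWithinAt (curveC p w δ) (Ici (seqT δ 0)) x := by
            apply continuousWithinAt_const.congr (g := curveC p w δ)
              (f := fun _ => p + seqT δ 0 • w 0)
            · intro y hy
              rw [curveC, if_pos (show seqT δ 0 ≤ y from hy)]
            · rw [curveC, if_pos hge]
          have hU := hA.union hB
          rw [Icc_union_Ici_eq_Ici hd10.le] at hU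
          exact hU.continuousAt (Ici_mem_nhds (by rw [← hgeq]; exact hd10))
        · -- x > seqT δ 0 : locally constant
          apply ContinuousAt.congr (continuousAt_const (y := p + seqT δ 0 • w 0))
          filter_upwards [Ioi_mem_nhds hgt] with y hy
          rw [curveC, if_pos (le_of_lt hy)]
      · -- 0 < x < seqT δ 0
        obtain ⟨n, hn1, hn2⟩ := exists_interval δ hδ h0 (not_le.1 hge)
        rcases eq_or_lt_of_le hn1 with heq | hlt
        · -- x = seqT δ (n+1) : paste
          have hd1 : seqT δ (n+2) < seqT δ (n+1) := hanti (lt_add_one _)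
          have hd0 : seqT δ (n+1) < seqT δ n := hanti (lt_add_one _)
          have hA : ContinuousWithinAt (curveC p w δ) (Icc (seqT δ (n+2)) (seqT δ (n+1))) x := by
            apply ((pieceF_continuous p w δ (n+1)).continuousAt.continuousWithinAt).congr
            · intro y hy
              exact curveC_eq p w δ hδ (n+1) hy.1 hy.2
            · exact curveC_eq p w δ hδ (n+1) (heq ▸ hd1.le) heq.ge
          have hB : ContinuousWithinAt (curveC p w δ) (Icc (seqT δ (n+1)) (seqT δ n)) x := by
            apply ((pieceF_continuous p w δ n).continuousAt.continuousWithinAt).congr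
            · intro y hy
              exact curveC_eq p w δ hδ n hy.1 hy.2
            · exact curveC_eq p w δ hδ n hn1 hn2.le
          have hU := hA.union hB
          rw [Icc_union_Icc_eq_Icc hd1.le hd0.le] at hU
          exact hU.continuousAt (Icc_mem_nhds (heq ▸ hd1) hn2)
        · -- seqT δ (n+1) < x < seqT δ n : interior of a piece
          apply ContinuousAt.congr (pieceF_continuous p w δ n).continuousAt
          filter_upwards [Ioo_mem_nhds hlt hn2] with y hy
          exact (curveC_eq p w δ hδ n hy.1.le hy.2.le).symm
  · -- membership
    intro x hx
    by_cases hge : seqT δ 0 ≤ x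
    · rw [curveC, if_pos hge]
      exact node_mem hconv hp w δ hδ hwC 0
    · rcases eq_or_lt_of_le (mem_Ici.mp hx : (0:ℝ) ≤ x) with h0 | h0
      · rw [← h0, hc0]; exact hp
      · obtain ⟨n, hn1, hn2⟩ := exists_interval δ hδ h0 (not_le.1 hge)
        rw [curveC_eq p w δ hδ n hn1 hn2.le]
        exact pieceF_mem hconv hp w δ hδ hwC n hn1 hn2.le
  · -- right derivative
    rw [Metric.tendsto_nhds]
    intro ε hε
    obtain ⟨N, hN⟩ := exists_nat_one_div_lt hε
    have hmem : Ioo (0:ℝ) (seqT δ (N+1)) ∈ 𝓝[>] (0:ℝ) :=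
      Ioo_mem_nhdsGT_of_mem ⟨le_rfl, seqT_pos δ hδ (N+1)⟩
    filter_upwards [hmem] with x hx
    obtain ⟨hx1, hx2⟩ := hx
    have hx0 : x < seqT δ 0 := lt_of_lt_of_le hx2 (hanti.antitone (Nat.zero_le (N+1)))
    obtain ⟨n, hn1, hn2⟩ := hbound x hx1 hx0
    have hNn : N + 1 < n + 1 := by
      have : seqT δ (n+1) < seqT δ (N+1) := lt_of_le_of_lt hn1 hx2
      exact Nat.succ_lt_succ (Nat.succ_lt_succ_iff.mp (hanti.lt_iff_gt.mp this))
    rw [dist_eq_norm]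
    calc ‖x⁻¹ • (curveC p w δ x - p) - v‖ ≤ 1/((n:ℝ)+1) := hn2
      _ ≤ 1/((N:ℝ)+1) := by
          apply one_div_le_one_div_of_le (by positivity)
          have : (N:ℝ) + 1 ≤ (n:ℝ) := by exact_mod_cast Nat.lt_succ_iff.mp hNn
          linarith
      _ < ε := hN

private lemma cone_convex {C : Set V} (hconv : Convex ℝ C) (p : V) (hp : p ∈ C) :
    Convex ℝ {y : V | ∃ s : ℝ, 0 ≤ s ∧ ∃ q ∈ C, y = s • (q - p)} := by
  rintro y₁ ⟨s₁, hs₁, q₁, hq₁, rfl⟩ y₂ ⟨s₂, hs₂, q₂, hq₂, rfl⟩ a b ha hb hab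
  by_cases hs : a * s₁ + b * s₂ = 0
  · have h1 : a * s₁ = 0 := by nlinarith
    have h2 : b * s₂ = 0 := by nlinarith
    refine ⟨0, le_rfl, p, hp, ?_⟩
    rw [smul_smul, smul_smul, h1, h2]
    simp
  · have hs0 : 0 < a * s₁ + b * s₂ :=
      lt_of_le_of_ne (by positivity) (Ne.symm hs)
    refine ⟨a * s₁ + b * s₂, hs0.le,
      (a * s₁ / (a * s₁ + b * s₂)) • q₁ + (b * s₂ / (a * s₁ + b * s₂)) • q₂,
      hconv hq₁ hq₂ (by positivity) (by positivity) (by field_simp), ?_⟩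
    match_scalars <;> field_simp <;> ring

private lemma mem_closure_cone {C : Set V} (hC : IsClosed C) (hconv : Convex ℝ C)
    {p : V} (hp : p ∈ C) {v : V}
    (hθ : ∀ θ : V →L[ℝ] ℝ, (∀ q ∈ C, θ p ≤ θ q) → 0 ≤ θ v) :
    v ∈ closure {y : V | ∃ s : ℝ, 0 ≤ s ∧ ∃ q ∈ C, y = s • (q - p)} := by
  set K := {y : V | ∃ s : ℝ, 0 ≤ s ∧ ∃ q ∈ C, y = s • (q - p)} with hK
  by_contra hvc
  obtain ⟨θ, u, h1, h2⟩ := geometric_hahn_banach_point_closed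
    (cone_convex hconv p hp).closure isClosed_closure hvc
  have h0K : (0:V) ∈ K := ⟨0, le_rfl, p, hp, by simp⟩
  have hu0 : u < 0 := by
    have := h2 0 (subset_closure h0K)
    simpa using this
  have hmin : ∀ q ∈ C, θ p ≤ θ q := by
    intro q hq
    by_contra hlt
    push_neg at hlt
    have hneg : θ q - θ p < 0 := by linarith
    set s : ℝ := (u - 1) / (θ q - θ p) with hs_def
    have hs0 : 0 ≤ s := by
      exact le_of_lt (div_pos_of_neg_of_neg (by linarith) hneg)
    have hmem : s • (q - p) ∈ K := ⟨s, hs0, q, hq, rfl⟩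
    have := h2 _ (subset_closure hmem)
    rw [map_smul, smul_eq_mul, map_sub, hs_def,
      div_mul_cancel₀ _ (ne_of_lt hneg)] at this
    linarith
  linarith [hθ θ hmin, h1]

end

/-- In a normed space, a continuous curve in the closed convex set `C`
starting at `p` with right derivative `v` exists iff `θ v ≥ 0` for every continuous
linear functional `θ` attaining its minimum over `C` at `p`. -/
theorem stmt2 {V : Type*} [NormedAddCommGroup V] [NormedSpace ℝ V]
    (C : Set V) (hC : IsClosed C) (hconv : Convex ℝ C) (p : V) (hp : p ∈ C) (v : V) :
    (∃ c : ℝ → V, ContinuousOn c (Ici 0) ∧ (∀ t ∈ Ici (0:ℝ), c t ∈ C) ∧ c 0 = p ∧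
        Tendsto (fun t : ℝ => t⁻¹ • (c t - p)) (𝓝[>] 0) (𝓝 v)) ↔
      ∀ θ : V →L[ℝ] ℝ, (∀ q ∈ C, θ p ≤ θ q) → 0 ≤ θ v := by
  constructor
  · rintro ⟨c, hcont, hmem, hc0, hderiv⟩ θ hθ
    have h1 : ∀ᶠ t in 𝓝[>] (0:ℝ), 0 ≤ θ (t⁻¹ • (c t - p)) := by
      filter_upwards [self_mem_nhdsWithin] with t ht
      have ht' : (0:ℝ) < t := ht
      rw [map_smul, smul_eq_mul, map_sub]
      have := hθ (c t) (hmem t ht'.le)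
      have h2 : (0:ℝ) ≤ θ (c t) - θ p := by linarith
      positivity
    have h2 : Tendsto (fun t : ℝ => θ (t⁻¹ • (c t - p))) (𝓝[>] (0:ℝ)) (𝓝 (θ v)) :=
      (θ.continuous.tendsto v).comp hderiv
    exact ge_of_tendsto h2 h1
  · intro hθ
    have hvK := mem_closure_cone hC hconv hp hθ
    have hw : ∀ n : ℕ, ∃ y, (∃ s : ℝ, 0 ≤ s ∧ ∃ q ∈ C, y = s • (q - p)) ∧
        ‖y - v‖ ≤ 1/((n:ℝ)+1) := by
      intro n
      have hε : (0:ℝ) < 1/((n:ℝ)+1) := by positivity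
      obtain ⟨y, hyK, hyd⟩ := Metric.mem_closure_iff.mp hvK _ hε
      exact ⟨y, hyK, by rw [← dist_eq_norm, dist_comm]; exact hyd.le⟩
    choose y hyK hyv using hw
    choose s hs q hq hyq using hyK
    have hδ : ∀ n, (0:ℝ) < 1/(s n + 1) := fun n => one_div_pos.2 (by linarith [hs n])
    have hwC : ∀ n, p + (1/(s n + 1)) • y n ∈ C := by
      intro n
      rw [hyq n, smul_smul]
      have ha : 0 ≤ 1/(s n + 1) * s n := mul_nonneg (hδ n).le (hs n)
      have ha1 : 1/(s n + 1) * s n ≤ 1 := by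
        rw [one_div, inv_mul_le_iff₀ (by linarith [hs n])]
        linarith [hs n]
      exact conv_seg hconv hp (hq n) ha ha1
    exact exists_curve hconv hp v y (fun n => 1/(s n + 1)) hδ hwC hyv
end

section
/- Let V be a locally-convex topological vector space, C a convex subset, p ∈ C, v ∈ V. Suppose v and C are contained in a subset X of V whose subspace topology is induced by a norm, and X contains the intersection of the tangent cone of C at p with an open neighborhood of v. Then there exists a curve c : [0,∞) → C with c(0) = p and right derivative v at 0 if and only if θ(v) ≥ 0 for all θ ∈ V* attaining their minimum over C at p. -/
open Filter Topology Set

set_option maxHeartbeats 1600000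

/-- Let `C` be a convex subset of a locally convex space `V`, `p ∈ C`,
`v ∈ V`. Suppose `v` and `C` lie in a subset `X` whose subspace topology is induced
by a norm `N` (on differences), and `X` contains the intersection of the tangent cone
of `C` at `p` with an open neighborhood of `v`. Then a curve in `C` starting at `p`
with right derivative `v` exists iff `θ v ≥ 0` for every continuous linear functional
`θ` attaining its minimum over `C` at `p`. -/
theorem stmt18 {V : Type*} [AddCommGroup V] [Module ℝ V] [TopologicalSpace V]
    [IsTopologicalAddGroup V] [ContinuousSMul ℝ V] [LocallyConvexSpace ℝ V]
    (C : Set V) (hconv : Convex ℝ C) (p : V) (hp : p ∈ C) (v : V)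
    (X : Set V) (hvX : v ∈ X) (hCX : C ⊆ X)
    (N : V → ℝ)
    (hN0 : ∀ w, 0 ≤ N w)
    (hNdef : ∀ x ∈ X, ∀ y ∈ X, (N (x - y) = 0 ↔ x = y))
    (hNhom : ∀ (c : ℝ) (w : V), N (c • w) = |c| * N w)
    (hNtri : ∀ w u : V, N (w + u) ≤ N w + N u)
    (hNtop : ∀ x ∈ X, ∀ S : Set V,
      S ∈ 𝓝[X] x ↔ ∃ ε > 0, {y ∈ X | N (y - x) < ε} ⊆ S)
    (hcone : ∃ O : Set V, IsOpen O ∧ v ∈ O ∧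
      {w : V | ∃ t : ℝ, 0 < t ∧ p + t • w ∈ C} ∩ O ⊆ X) :
    (∃ c : ℝ → V, ContinuousOn c (Ici 0) ∧ (∀ t ∈ Ici (0:ℝ), c t ∈ C) ∧ c 0 = p ∧
        Tendsto (fun t : ℝ => t⁻¹ • (c t - p)) (𝓝[>] 0) (𝓝 v)) ↔
      ∀ θ : V →L[ℝ] ℝ, (∀ q ∈ C, θ p ≤ θ q) → 0 ≤ θ v := by
  classical
  constructor
  · rintro ⟨c, hcont, hcC, hc0, hderiv⟩ θ hθ
    have h2 : Tendsto (fun t : ℝ => θ (t⁻¹ • (c t - p))) (𝓝[>] 0) (𝓝 (θ v)) :=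
      (θ.continuous.tendsto v).comp hderiv
    refine ge_of_tendsto h2 ?_
    filter_upwards [self_mem_nhdsWithin] with t ht
    have ht0 : (0:ℝ) < t := ht
    have hct : c t ∈ C := hcC t (le_of_lt ht0)
    have h3 : (0:ℝ) ≤ θ (c t) - θ p := sub_nonneg.2 (hθ _ hct)
    show (0:ℝ) ≤ θ (t⁻¹ • (c t - p))
    rw [map_smul, map_sub]
    have h4 := mul_nonneg (inv_nonneg.2 ht0.le) h3
    simpa [smul_eq_mul] using h4
  · intro hθall
    obtain ⟨O, hOopen, hvO, hOX⟩ := hcone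
    set T : Set V := {w : V | ∃ t : ℝ, 0 < t ∧ p + t • w ∈ C} with hT
    -- staying in C for smaller times
    have hTsmall : ∀ (w : V) (t0 : ℝ), 0 < t0 → p + t0 • w ∈ C →
        ∀ t' : ℝ, 0 < t' → t' ≤ t0 → p + t' • w ∈ C := by
      intro w t0 ht0 hmem t' ht' hle
      have ht0' : t0 ≠ 0 := ne_of_gt ht0
      have hkey : p + t' • w = (1 - t'/t0) • p + (t'/t0) • (p + t0 • w) := by
        match_scalars <;> field_simp <;> ring
      rw [hkey]
      exact hconv hp hmem (by rw [sub_nonneg]; exact div_le_one_of_le₀ hle ht0.le)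
        (by positivity) (by ring)
    -- T is convex
    have hTconv : Convex ℝ T := by
      intro w1 hw1 w2 hw2 a b ha hb hab
      obtain ⟨t1, ht1, hm1⟩ := hw1
      obtain ⟨t2, ht2, hm2⟩ := hw2
      have htm : 0 < min t1 t2 := lt_min ht1 ht2
      refine ⟨min t1 t2, htm, ?_⟩
      have h1 : p + (min t1 t2) • w1 ∈ C := hTsmall w1 t1 ht1 hm1 _ htm (min_le_left _ _)
      have h2 : p + (min t1 t2) • w2 ∈ C := hTsmall w2 t2 ht2 hm2 _ htm (min_le_right _ _)
      have hb' : b = 1 - a := by linarith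
      subst hb'
      have hkey : p + (min t1 t2) • (a • w1 + (1-a) • w2)
          = a • (p + (min t1 t2) • w1) + (1-a) • (p + (min t1 t2) • w2) := by module
      rw [hkey]
      exact hconv h1 h2 ha hb (by ring)
    -- v lies in the closure of T
    have hvcl : v ∈ closure T := by
      by_contra hv
      obtain ⟨f, u, hfv, hfT⟩ :=
        geometric_hahn_banach_point_closed hTconv.closure isClosed_closure hv
      have h0T : (0:V) ∈ T := ⟨1, one_pos, by simpa using hp⟩
      have hu0 : u < 0 := by simpa using hfT 0 (subset_closure h0T)
      have hmin : ∀ q ∈ C, f p ≤ f q := by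
        intro q hq
        by_contra hlt
        push_neg at hlt
        have hfqp : f (q - p) < 0 := by rw [map_sub]; linarith
        set s : ℝ := 2 * u / f (q - p) with hs
        have hspos : 0 < s := div_pos_of_neg_of_neg (by linarith) hfqp
        have hmemT : s • (q - p) ∈ T := by
          refine ⟨s⁻¹, inv_pos.2 hspos, ?_⟩
          rw [smul_smul, inv_mul_cancel₀ (ne_of_gt hspos), one_smul]
          simpa using hq
        have hlt2 := hfT _ (subset_closure hmemT)
        rw [map_smul] at hlt2
        simp only [smul_eq_mul] at hlt2
        have hseq : s * f (q - p) = 2 * u := by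
          rw [hs, div_mul_cancel₀ _ (ne_of_lt hfqp)]
        rw [hseq] at hlt2
        linarith
      have := hθall f hmin
      linarith
    -- convex open neighborhood U of v inside O
    obtain ⟨U', hU'⟩ := (LocallyConvexSpace.convex_basis (𝕜 := ℝ) v).mem_iff.1
      (hOopen.mem_nhds hvO)
    set U : Set V := interior U' with hU
    have hUopen : IsOpen U := isOpen_interior
    have hvU : v ∈ U := mem_interior_iff_mem_nhds.2 hU'.1.1
    have hUconv : Convex ℝ U := hU'.1.2.interior
    have hUO : U ⊆ O := interior_subset.trans hU'.2
    have hTUX : T ∩ U ⊆ X := fun w hw => hOX ⟨hw.1, hUO hw.2⟩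
    have hTUconv : Convex ℝ (T ∩ U) := hTconv.inter hUconv
    -- approximating sequence
    have hwex : ∀ n : ℕ, ∃ w : V, w ∈ T ∧ w ∈ U ∧ N (w - v) < 1/(n+1) := by
      intro n
      have hball : {y ∈ X | N (y - v) < 1/(n+1)} ∈ 𝓝[X] v :=
        (hNtop v hvX _).2 ⟨1/(n+1), by positivity, Subset.rfl⟩
      rw [mem_nhdsWithin] at hball
      obtain ⟨W, hWopen, hvW, hWsub⟩ := hball
      have hne : ((W ∩ U) ∩ T).Nonempty := by
        rw [mem_closure_iff] at hvcl
        exact hvcl _ (hWopen.inter hUopen) ⟨hvW, hvU⟩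
      obtain ⟨w, ⟨hwW, hwU⟩, hwT⟩ := hne
      have hwX : w ∈ X := hTUX ⟨hwT, hwU⟩
      exact ⟨w, hwT, hwU, (hWsub ⟨hwW, hwX⟩).2⟩
    choose w hwT hwU hwN using hwex
    have hwTex : ∀ n : ℕ, ∃ t : ℝ, 0 < t ∧ p + t • (w n) ∈ C := fun n => hwT n
    choose τ hτpos hτmem using hwTex
    -- the time sequence
    obtain ⟨tt, htt0, httS⟩ : ∃ tt : ℕ → ℝ, tt 0 = min (τ 0) 1 ∧
        ∀ n, tt (n+1) = min (τ (n+1)) (min (tt n / 2) (1/(n+2))) :=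
      ⟨fun n => Nat.rec (min (τ 0) 1) (fun n ih => min (τ (n+1)) (min (ih / 2) (1/(n+2)))) n,
        rfl, fun _ => rfl⟩
    have httpos : ∀ n, 0 < tt n := by
      intro n
      induction n with
      | zero => rw [htt0]; exact lt_min (hτpos 0) one_pos
      | succ n ih => rw [httS]; exact lt_min (hτpos _) (lt_min (by linarith) (by positivity))
    have httτ : ∀ n, tt n ≤ τ n := by
      intro n
      cases n with
      | zero => rw [htt0]; exact min_le_left _ _
      | succ n => rw [httS]; exact min_le_left _ _
    have htthalf : ∀ n, tt (n+1) ≤ tt n / 2 := fun n => by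
      rw [httS]; exact le_trans (min_le_right _ _) (min_le_left _ _)
    have httlt : ∀ n, tt (n+1) < tt n := fun n =>
      lt_of_le_of_lt (htthalf n) (by linarith [httpos n])
    have httanti : StrictAnti tt := strictAnti_nat_of_succ_lt httlt
    have httbound : ∀ n : ℕ, tt n ≤ 1/(n+1) := by
      intro n
      cases n with
      | zero => rw [htt0]; simpa using min_le_right _ _
      | succ n =>
        rw [httS]
        refine le_trans (min_le_right _ _) (le_trans (min_le_right _ _) (le_of_eq ?_))
        push_cast
        ring
    have hone : ∀ n, tt n - tt (n+1) ≠ 0 := fun n => ne_of_gt (sub_pos.2 (httlt n))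
    -- the points
    set q : ℕ → V := fun n => p + tt n • w n with hq
    have hqC : ∀ n, q n ∈ C := fun n =>
      hTsmall (w n) (τ n) (hτpos n) (hτmem n) (tt n) (httpos n) (httτ n)
    -- existence of a segment index for each positive time
    have hex : ∀ s : ℝ, 0 < s → ∃ n, tt (n+1) ≤ s := by
      intro s hs
      obtain ⟨m, hm⟩ := exists_nat_one_div_lt hs
      exact ⟨m, le_of_lt (lt_of_le_of_lt
        (le_trans (le_of_lt (httlt m)) (httbound m)) (by exact_mod_cast hm))⟩
    have hex' : ∀ s : ℝ, ∃ n : ℕ, tt (n+1) ≤ s ∨ s ≤ 0 := by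
      intro s
      rcases le_or_gt s 0 with h | h
      · exact ⟨0, Or.inr h⟩
      · exact (hex s h).imp fun n hn => Or.inl hn
    set nn : ℝ → ℕ := fun s => Nat.find (hex' s) with hnn
    have hfind : ∀ (n : ℕ) (s : ℝ), tt (n+1) ≤ s → s < tt n → nn s = n := by
      intro n s h1 h2
      have hs : 0 < s := lt_of_lt_of_le (httpos _) h1
      rw [hnn]
      rw [Nat.find_eq_iff]
      refine ⟨Or.inl h1, fun m hm => ?_⟩
      rintro (h | h)
      · exact absurd h (not_le.2 (lt_of_lt_of_le h2 (httanti.antitone (by omega))))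
      · exact absurd h (not_le.2 hs)
    -- the curve
    set c : ℝ → V := fun s =>
      if 0 < s ∧ s < tt 0 then
        ((tt (nn s) - s) / (tt (nn s) - tt (nn s + 1))) • q (nn s + 1) +
        ((s - tt (nn s + 1)) / (tt (nn s) - tt (nn s + 1))) • q (nn s)
      else if 0 < s then q 0 else p with hcdef
    have hc0 : c 0 = p := by
      simp only [hcdef]
      norm_num
    have hctop : ∀ s : ℝ, tt 0 ≤ s → c s = q 0 := by
      intro s hs
      have h1 : ¬(0 < s ∧ s < tt 0) := fun h => absurd h.2 (not_lt.2 hs)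
      simp only [hcdef]
      rw [if_neg h1, if_pos (lt_of_lt_of_le (httpos 0) hs)]
    -- value on segments
    have hcval : ∀ (n : ℕ) (s : ℝ), tt (n+1) ≤ s → s ≤ tt n →
        c s = ((tt n - s)/(tt n - tt (n+1))) • q (n+1) +
          ((s - tt (n+1))/(tt n - tt (n+1))) • q n := by
      intro n s h1 h2
      have hs : 0 < s := lt_of_lt_of_le (httpos _) h1
      rcases lt_or_eq_of_le h2 with h2' | h2'
      · have hlt0 : s < tt 0 := lt_of_lt_of_le h2' (httanti.antitone (Nat.zero_le n))
        have hc : (0 < s ∧ s < tt 0) := ⟨hs, hlt0⟩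
        simp only [hcdef]
        rw [if_pos hc, hfind n s h1 h2']
      · -- s = tt n
        cases n with
        | zero =>
          have heq : c s = q 0 := hctop s (le_of_eq h2'.symm)
          rw [heq, h2']
          simp [sub_self, div_self (hone 0)]
        | succ m =>
          have h1' : tt (m+1) ≤ s := le_of_eq h2'.symm
          have h2'' : s < tt m := by rw [h2']; exact httlt m
          have hlt0 : s < tt 0 := lt_of_lt_of_le h2'' (httanti.antitone (Nat.zero_le m))
          have hc : (0 < s ∧ s < tt 0) := ⟨hs, hlt0⟩
          simp only [hcdef]
          rw [if_pos hc, hfind m s h1' h2'', h2']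
          simp [sub_self, div_self (hone m), div_self (hone (m+1))]
    -- segment index existence with both bounds
    have hsegof : ∀ s : ℝ, 0 < s → s ≤ tt 0 → ∃ n, tt (n+1) ≤ s ∧ s ≤ tt n := by
      intro s hs hs0
      refine ⟨Nat.find (hex s hs), Nat.find_spec (hex s hs), ?_⟩
      rcases Nat.eq_zero_or_pos (Nat.find (hex s hs)) with h0 | h0
      · rw [h0]; exact hs0
      · obtain ⟨m, hm⟩ := Nat.exists_eq_succ_of_ne_zero (Nat.pos_iff_ne_zero.1 h0)
        have hmin := Nat.find_min (hex s hs) (m := m) (by omega)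
        rw [hm]
        exact le_of_lt (not_le.1 hmin)
    have hmemC : ∀ s : ℝ, 0 ≤ s → c s ∈ C := by
      intro s hs
      rcases eq_or_lt_of_le hs with h | h
      · rw [← h, hc0]; exact hp
      rcases le_or_gt (tt 0) s with h' | h'
      · rw [hctop s h']; exact hqC 0
      obtain ⟨n, hn1, hn2⟩ := hsegof s h (le_of_lt h')
      rw [hcval n s hn1 hn2]
      have hδ : 0 < tt n - tt (n+1) := sub_pos.2 (httlt n)
      have hδ' := hone n
      refine hconv (hqC (n+1)) (hqC n) ?_ ?_ ?_
      · exact div_nonneg (by linarith) hδ.le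
      · exact div_nonneg (by linarith) hδ.le
      · field_simp; ring
    -- convex combination decomposition helper
    have hcomb : ∀ (a b : ℝ) (x y z : V), a + b = 1 →
        a • x + b • y - z = a • (x - z) + b • (y - z) := by
      intro a b x y z hab
      have hb' : b = 1 - a := by linarith
      subst hb'
      module
    -- the difference quotient on segments
    have hγ : ∀ (n : ℕ) (s : ℝ), tt (n+1) ≤ s → s ≤ tt n →
        (s⁻¹ • (c s - p) ∈ T ∩ U) ∧ N (s⁻¹ • (c s - p) - v) ≤ 1/(n+1) := by
      intro n s h1 h2
      have hs : 0 < s := lt_of_lt_of_le (httpos _) h1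
      have hsne : s ≠ 0 := ne_of_gt hs
      have hδ : 0 < tt n - tt (n+1) := sub_pos.2 (httlt n)
      have hδ' := hone n
      set A : ℝ := (tt n - s)/(tt n - tt (n+1)) with hA
      set B : ℝ := (s - tt (n+1))/(tt n - tt (n+1)) with hB
      have hA0 : 0 ≤ A := div_nonneg (by linarith) hδ.le
      have hB0 : 0 ≤ B := div_nonneg (by linarith) hδ.le
      set a : ℝ := s⁻¹ * (A * tt (n+1)) with ha
      set b : ℝ := s⁻¹ * (B * tt n) with hb
      have ha0 : 0 ≤ a := by
        rw [ha]
        exact mul_nonneg (inv_nonneg.2 hs.le) (mul_nonneg hA0 (httpos _).le)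
      have hb0 : 0 ≤ b := by
        rw [hb]
        exact mul_nonneg (inv_nonneg.2 hs.le) (mul_nonneg hB0 (httpos _).le)
      have hab : a + b = 1 := by
        rw [ha, hb, hA, hB]
        field_simp
        ring
      have hγval : s⁻¹ • (c s - p) = a • w (n+1) + b • w n := by
        rw [hcval n s h1 h2]
        simp only [hq, ha, hb, hA, hB]
        match_scalars <;> field_simp <;> ring
      constructor
      · rw [hγval]
        have hb' : b = 1 - a := by linarith
        rw [hb']
        exact hTUconv ⟨hwT (n+1), hwU (n+1)⟩ ⟨hwT n, hwU n⟩ ha0 (by linarith) (by ring)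
      · rw [hγval, hcomb a b _ _ _ hab]
        calc N (a • (w (n+1) - v) + b • (w n - v))
            ≤ N (a • (w (n+1) - v)) + N (b • (w n - v)) := hNtri _ _
          _ = a * N (w (n+1) - v) + b * N (w n - v) := by
              rw [hNhom, hNhom, abs_of_nonneg ha0, abs_of_nonneg hb0]
          _ ≤ a * (1/(n+1)) + b * (1/(n+1)) := by
              have e1 : N (w (n+1) - v) ≤ 1/(n+1) := by
                refine le_trans (le_of_lt (hwN (n+1))) ?_
                push_cast
                rw [div_le_div_iff₀ (by positivity) (by positivity)]
                linarith
              have e2 : N (w n - v) ≤ 1/(n+1) := le_of_lt (hwN n)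
              have f1 := mul_le_mul_of_nonneg_left e1 ha0
              have f2 := mul_le_mul_of_nonneg_left e2 hb0
              linarith
          _ = 1/(n+1) := by rw [← add_mul, hab, one_mul]
    -- Lipschitz estimates
    set L : ℝ := 4 + N v with hL
    have hLpos : 0 < L := by rw [hL]; linarith [hN0 v]
    have hNzero : N 0 = 0 := by
      have h := hNhom 0 0
      simpa using h
    have hNsymm : ∀ x y : V, N (x - y) = N (y - x) := by
      intro x y
      have h := hNhom (-1) (y - x)
      simp only [neg_one_smul, abs_neg, abs_one, one_mul] at h
      rw [← h, neg_sub]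
    have hεle : ∀ n : ℕ, N (w n - v) ≤ 1 := by
      intro n
      refine le_trans (le_of_lt (hwN n)) ?_
      rw [div_le_one (by positivity)]
      linarith [Nat.cast_nonneg (α := ℝ) n]
    have hsegLip : ∀ (n : ℕ) (s s' : ℝ), tt (n+1) ≤ s → s ≤ s' → s' ≤ tt n →
        N (c s' - c s) ≤ L * (s' - s) := by
      intro n s s' h1 h12 h2
      have hδ : 0 < tt n - tt (n+1) := sub_pos.2 (httlt n)
      have hδ' := hone n
      have hdiffval : c s' - c s = ((s' - s)/(tt n - tt (n+1))) • (q n - q (n+1)) := by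
        rw [hcval n s h1 (le_trans h12 h2), hcval n s' (le_trans h1 h12) h2]
        match_scalars <;> field_simp <;> ring
      have hqq : q n - q (n+1) = tt n • (w n - v) + tt (n+1) • (v - w (n+1)) +
          (tt n - tt (n+1)) • v := by
        simp only [hq]
        module
      have hNq : N (q n - q (n+1)) ≤ (tt n - tt (n+1)) * L := by
        rw [hqq]
        calc N (tt n • (w n - v) + tt (n+1) • (v - w (n+1)) + (tt n - tt (n+1)) • v)
            ≤ N (tt n • (w n - v) + tt (n+1) • (v - w (n+1))) + N ((tt n - tt (n+1)) • v) :=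
              hNtri _ _
          _ ≤ N (tt n • (w n - v)) + N (tt (n+1) • (v - w (n+1))) + N ((tt n - tt (n+1)) • v) := by
              linarith [hNtri (tt n • (w n - v)) (tt (n+1) • (v - w (n+1)))]
          _ = tt n * N (w n - v) + tt (n+1) * N (v - w (n+1)) + (tt n - tt (n+1)) * N v := by
              rw [hNhom, hNhom, hNhom, abs_of_nonneg (httpos n).le,
                abs_of_nonneg (httpos (n+1)).le, abs_of_nonneg hδ.le]
          _ ≤ (tt n - tt (n+1)) * L := by
              have e1 := hεle n
              have e2 : N (v - w (n+1)) ≤ 1 := by rw [hNsymm]; exact hεle (n+1)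
              have h3 : tt (n+1) ≤ tt n / 2 := htthalf n
              have h4 : tt n * N (w n - v) ≤ tt n :=
                mul_le_of_le_one_right (httpos n).le e1
              have h5 : tt (n+1) * N (v - w (n+1)) ≤ tt (n+1) :=
                mul_le_of_le_one_right (httpos (n+1)).le e2
              rw [hL]
              nlinarith [httpos n, httpos (n+1), hN0 v]
      rw [hdiffval, hNhom, abs_of_nonneg (div_nonneg (by linarith) hδ.le)]
      calc (s' - s)/(tt n - tt (n+1)) * N (q n - q (n+1))
          ≤ (s' - s)/(tt n - tt (n+1)) * ((tt n - tt (n+1)) * L) :=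
            mul_le_mul_of_nonneg_left hNq (div_nonneg (by linarith) hδ.le)
        _ = L * (s' - s) := by field_simp
    have hchainLip : ∀ (n : ℕ) (s s' : ℝ), tt (n+1) ≤ s → s ≤ s' → s' ≤ tt 0 →
        N (c s' - c s) ≤ L * (s' - s) := by
      intro n
      induction n with
      | zero => exact fun s s' h1 h2 h3 => hsegLip 0 s s' h1 h2 h3
      | succ m ih =>
        intro s s' h1 h2 h3
        rcases le_or_gt (tt (m+1)) s with hcase | hcase
        · exact ih s s' hcase h2 h3
        rcases le_or_gt s' (tt (m+1)) with hcase' | hcase'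
        · exact hsegLip (m+1) s s' h1 h2 hcase'
        have e1 : N (c s' - c (tt (m+1))) ≤ L * (s' - tt (m+1)) :=
          ih (tt (m+1)) s' le_rfl hcase'.le h3
        have e2 : N (c (tt (m+1)) - c s) ≤ L * (tt (m+1) - s) :=
          hsegLip (m+1) s (tt (m+1)) h1 hcase.le le_rfl
        have hsplit : c s' - c s = (c s' - c (tt (m+1))) + (c (tt (m+1)) - c s) := by abel
        rw [hsplit]
        calc N ((c s' - c (tt (m+1))) + (c (tt (m+1)) - c s))
            ≤ N (c s' - c (tt (m+1))) + N (c (tt (m+1)) - c s) := hNtri _ _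
          _ ≤ L * (s' - s) := by linarith
    -- distance to p
    have hLipP : ∀ s : ℝ, 0 ≤ s → s ≤ tt 0 → N (c s - p) ≤ L * s := by
      intro s hs hs0
      rcases eq_or_lt_of_le hs with h | h
      · rw [← h, hc0, sub_self, hNzero]
        simp
      obtain ⟨n, hn1, hn2⟩ := hsegof s h hs0
      obtain ⟨_, hNb⟩ := hγ n s hn1 hn2
      have hrw : c s - p = s • (s⁻¹ • (c s - p)) := by
        rw [smul_inv_smul₀ (ne_of_gt h)]
      have hsplit : s⁻¹ • (c s - p) = (s⁻¹ • (c s - p) - v) + v := by abel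
      have hb1 : N (s⁻¹ • (c s - p)) ≤ 1 + N v := by
        rw [hsplit]
        refine le_trans (hNtri _ _) ?_
        have : (1:ℝ)/(n+1) ≤ 1 := by
          rw [div_le_one (by positivity)]
          linarith [Nat.cast_nonneg (α := ℝ) n]
        linarith
      calc N (c s - p) = N (s • (s⁻¹ • (c s - p))) := by rw [← hrw]
        _ = s * N (s⁻¹ • (c s - p)) := by rw [hNhom, abs_of_nonneg hs]
        _ ≤ s * (1 + N v) := mul_le_mul_of_nonneg_left hb1 hs
        _ ≤ L * s := by rw [hL]; nlinarith [hN0 v]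
    -- global Lipschitz
    have hLip1 : ∀ s s' : ℝ, 0 ≤ s → s ≤ s' → s' ≤ tt 0 → N (c s' - c s) ≤ L * (s' - s) := by
      intro s s' hs hss hs'
      rcases eq_or_lt_of_le hs with h0 | h0
      · rw [← h0, hc0]
        simpa using hLipP s' (h0 ▸ hss) hs'
      · obtain ⟨n, hn1, _⟩ := hsegof s h0 (le_trans hss hs')
        exact hchainLip n s s' hn1 hss hs'
    have hLip : ∀ s s' : ℝ, 0 ≤ s → s ≤ s' → N (c s' - c s) ≤ L * (s' - s) := by
      intro s s' hs hss
      rcases le_or_gt s' (tt 0) with hb | hb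
      · exact hLip1 s s' hs hss hb
      rcases le_or_gt (tt 0) s with hb' | hb'
      · rw [hctop s hb', hctop s' (le_trans hb' hss), sub_self, hNzero]
        exact mul_nonneg hLpos.le (by linarith)
      · have e0 : c s' = c (tt 0) := by rw [hctop s' hb.le, hctop (tt 0) le_rfl]
        rw [e0]
        have e1 : N (c (tt 0) - c s) ≤ L * (tt 0 - s) := hLip1 s (tt 0) hs hb'.le le_rfl
        refine le_trans e1 ?_
        exact mul_le_mul_of_nonneg_left (by linarith) hLpos.le
    -- assemble
    refine ⟨c, ?_, fun t ht => hmemC t ht, hc0, ?_⟩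
    · -- continuity
      intro s₀ hs₀
      have hs₀' : (0:ℝ) ≤ s₀ := hs₀
      have hcX : c s₀ ∈ X := hCX (hmemC s₀ hs₀')
      show Tendsto c (𝓝[Ici 0] s₀) (𝓝 (c s₀))
      refine Tendsto.mono_right ?_ (nhdsWithin_le_nhds (s := X))
      rw [Filter.tendsto_def]
      intro S hS
      obtain ⟨ε, hε, hball⟩ := (hNtop _ hcX S).1 hS
      have hmemb : {s : ℝ | |s - s₀| < ε / L} ∈ 𝓝[Ici 0] s₀ := by
        refine mem_nhdsWithin_of_mem_nhds ?_
        have := Metric.ball_mem_nhds s₀ (div_pos hε hLpos)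
        simpa [Metric.ball, Real.dist_eq] using this
      filter_upwards [hmemb, self_mem_nhdsWithin] with s hsd hsI
      refine hball ⟨hCX (hmemC s hsI), ?_⟩
      have hd : L * |s - s₀| < ε := by
        rw [← lt_div_iff₀' hLpos]
        exact hsd
      rcases le_total s s₀ with hle | hle
      · rw [hNsymm]
        refine lt_of_le_of_lt (hLip s s₀ hsI hle) ?_
        calc L * (s₀ - s) ≤ L * |s - s₀| := by
              rw [abs_sub_comm, abs_of_nonneg (by linarith)]
          _ < ε := hd
      · refine lt_of_le_of_lt (hLip s₀ s hs₀' hle) ?_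
        calc L * (s - s₀) ≤ L * |s - s₀| := by
              rw [abs_of_nonneg (by linarith)]
          _ < ε := hd
    · -- right derivative
      refine Tendsto.mono_right ?_ (nhdsWithin_le_nhds (s := X))
      rw [Filter.tendsto_def]
      intro S hS
      obtain ⟨ε, hε, hball⟩ := (hNtop v hvX S).1 hS
      obtain ⟨m, hm⟩ := exists_nat_one_div_lt hε
      have hmem : Ioo (0:ℝ) (tt (m+1)) ∈ 𝓝[>] (0:ℝ) :=
        Ioo_mem_nhdsGT_of_mem ⟨le_refl 0, httpos (m+1)⟩
      filter_upwards [hmem] with s hs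
      have hstt0 : s ≤ tt 0 :=
        le_of_lt (lt_of_lt_of_le hs.2 (httanti.antitone (Nat.zero_le (m+1))))
      obtain ⟨n, hn1, hn2⟩ := hsegof s hs.1 hstt0
      obtain ⟨hTU, hNb⟩ := hγ n s hn1 hn2
      refine hball ⟨hTUX hTU, ?_⟩
      have hmn : m + 1 ≤ n := by
        by_contra hcon
        push_neg at hcon
        have := httanti.antitone (show n + 1 ≤ m + 1 by omega)
        linarith [hs.2, hn1]
      refine lt_of_le_of_lt hNb ?_
      have hle : (1:ℝ)/(n+1) ≤ 1/(m+1) := by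
        apply one_div_le_one_div_of_le (by positivity)
        have : (m:ℝ) ≤ n := by exact_mod_cast le_of_lt (by omega : m < n)
        linarith
      exact lt_of_le_of_lt hle hm
end
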